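/- Let Φ be the MPP instance reduced from a 3SAT instance (X, C) with n variables and m clauses (as described in the context). If (X, C) is satisfiable, then Φ admits a solution in which all n+m robots start moving at time step zero, each follows a shortest path, and each arrives at its goal at time step m+2; in particular Φ admits a solution with total arrival time (n+m)(m+2) and makespan m+2. -/
import Mathlib


/-!
Formalization of multi-robot path planning on graphs (MPP).

An MPP instance consists of a connected simple graph `G` on a vertex type `V`,
a finite set of robots (an index type `R`), and injective start/goal
configurations `xI xG : R → V`.  A scheduled path is a map `ℕ → V`.
-/

namespace MPPFormal

variable {V R : Type}

/-- The arrival time of a path `p` with goal `g`: the smallest time `t`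
with `p t = g`. -/
noncomputable def arrivalTime (g : V) (p : ℕ → V) : ℕ := sInf {t | p t = g}

/-- A feasible scheduled path from `s` to `g` in the graph `G`:
it starts at `s`, reaches `g` at some time, stays at `g` forever after the
first time it reaches `g`, and at every time step it either traverses an
edge of `G` or stays put. -/
def FeasiblePath (G : SimpleGraph V) (s g : V) (p : ℕ → V) : Prop :=
  p 0 = s ∧ (∃ t, p t = g) ∧ (∀ t, arrivalTime g p ≤ t → p t = g) ∧
    ∀ t, G.Adj (p t) (p (t + 1)) ∨ p t = p (t + 1)

/-- Two scheduled paths collide if they meet at the same vertex at the same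
time, or if they swap along an edge head-on. -/
def Collide (p q : ℕ → V) : Prop :=
  (∃ t, p t = q t) ∨ ∃ t, p t = q (t + 1) ∧ p (t + 1) = q t ∧ p t ≠ p (t + 1)

/-- The length of a scheduled path: the number of time steps at which it
actually moves. -/
noncomputable def pathLen (p : ℕ → V) : ℕ := Set.ncard {t | p t ≠ p (t + 1)}

/-- A solution to the MPP instance `(G, R, xI, xG)`: a family of pairwise
non-colliding feasible paths, one per robot. -/
def IsSolution (G : SimpleGraph V) (xI xG : R → V) (p : R → ℕ → V) : Prop :=
  (∀ i, FeasiblePath G (xI i) (xG i) (p i)) ∧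
    Pairwise fun i j => ¬ Collide (p i) (p j)

/-- `(G, xI, xG)` together with the robot index type `R` forms an MPP
instance: the graph is connected and the start and goal configurations are
injective. -/
def IsMPPInstance (G : SimpleGraph V) (xI xG : R → V) : Prop :=
  G.Connected ∧ Function.Injective xI ∧ Function.Injective xG

variable [Fintype R]

/-- Total arrival time of a solution. -/
noncomputable def totalTime (xG : R → V) (p : R → ℕ → V) : ℕ :=
  ∑ i, arrivalTime (xG i) (p i)

/-- Makespan (last arrival time) of a solution. -/
noncomputable def makespan (xG : R → V) (p : R → ℕ → V) : ℕ :=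
  Finset.univ.sup fun i => arrivalTime (xG i) (p i)

/-- Total distance traveled in a solution. -/
noncomputable def totalDist (p : R → ℕ → V) : ℕ := ∑ i, pathLen (p i)

/-- Maximum single-robot distance of a solution. -/
noncomputable def maxDist (p : R → ℕ → V) : ℕ :=
  Finset.univ.sup fun i => pathLen (p i)

/-- Minimum total arrival time over all solutions. -/
noncomputable def minTotalTime (G : SimpleGraph V) (xI xG : R → V) : ℕ :=
  sInf {c | ∃ p, IsSolution G xI xG p ∧ totalTime xG p = c}

/-- Minimum makespan over all solutions. -/
noncomputable def minMakespan (G : SimpleGraph V) (xI xG : R → V) : ℕ :=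
  sInf {c | ∃ p, IsSolution G xI xG p ∧ makespan xG p = c}

/-- Minimum total distance over all solutions. -/
noncomputable def minTotalDist (G : SimpleGraph V) (xI xG : R → V) : ℕ :=
  sInf {c | ∃ p, IsSolution G xI xG p ∧ totalDist p = c}

/-- Minimum maximum distance over all solutions. -/
noncomputable def minMaxDist (G : SimpleGraph V) (xI xG : R → V) : ℕ :=
  sInf {c | ∃ p, IsSolution G xI xG p ∧ maxDist p = c}

end MPPFormal

/-!
The reduction from 3SAT to MPP.

A 3SAT instance over `n` variables with `m` clauses assigns to each clause
`j : Fin m` three literals; a literal is a pair `(i, b) : Fin n × Bool`,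
`b = true` meaning the non-negated variable `x_i` and `b = false` the
negated literal `¬ x_i`.  The three literals of each clause involve three
distinct variables.
-/

namespace MPPFormal

/-- A 3SAT instance with variables `x_1, …, x_n` and clauses `c_1, …, c_m`. -/
structure ThreeSat (n m : ℕ) where
  lit : Fin m → Fin 3 → Fin n × Bool
  distinctVars : ∀ j (k k' : Fin 3), k ≠ k' → (lit j k).1 ≠ (lit j k').1

/-- An assignment `a` satisfies the instance if every clause contains a true
literal. -/
def ThreeSat.SatisfiedBy {n m : ℕ} (sat : ThreeSat n m) (a : Fin n → Bool) : Prop :=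
  ∀ j, ∃ k, a (sat.lit j k).1 = (sat.lit j k).2

/-- Satisfiability of a 3SAT instance. -/
def ThreeSat.Satisfiable {n m : ℕ} (sat : ThreeSat n m) : Prop :=
  ∃ a, sat.SatisfiedBy a

/-- Vertices of the MPP instance `Φ` reduced from a 3SAT instance with `n`
variables and `m` clauses:
* `vx i` is the left endpoint `v_{x_i}` of the `i`-th variable strip (start of
  the variable robot `r_{x_i}`);
* `vxg i` is the right endpoint `v_{x_i}^g` (goal of `r_{x_i}`);
* `mid i side k` is the interior vertex of the `i`-th upper (`side = true`)
  or lower (`side = false`) path lying at distance `k + 1` from `vx i`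
  (each of the two paths has length `m + 2`, hence `m + 1` interior
  vertices, `k : Fin (m+1)`);
* `vc j` is the start vertex `v_{c_j}` of the clause robot `r_{c_j}`;
* `vcg j` is its goal vertex `v_{c_j}^g`. -/
inductive PhiV (n m : ℕ) where
  | vx (i : Fin n)
  | vxg (i : Fin n)
  | mid (i : Fin n) (side : Bool) (k : Fin (m + 1))
  | vc (j : Fin m)
  | vcg (j : Fin m)
deriving DecidableEq

/-- Base relation generating the edges of `Φ`:
the two length-`(m+2)` paths of each variable strip; an edge from `v_{c_j}`
to the vertex at distance `j + 1` (`1`-indexed: distance `j`) from `v_{x_i}`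
on the upper (resp. lower) path of `x_i` for each non-negated (resp. negated)
literal of `c_j`; the path `v_{c_1}^g - ⋯ - v_{c_m}^g`; and edges from
`v_{c_m}^g` to every `v_{x_i}`. -/
def phiRel {n m : ℕ} (sat : ThreeSat n m) : PhiV n m → PhiV n m → Prop
  | PhiV.vx i, PhiV.mid i' _ k => i = i' ∧ (k : ℕ) = 0
  | PhiV.mid i s k, PhiV.mid i' s' k' => i = i' ∧ s = s' ∧ (k' : ℕ) = (k : ℕ) + 1
  | PhiV.mid i _ k, PhiV.vxg i' => i = i' ∧ (k : ℕ) = m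
  | PhiV.vc j, PhiV.mid i s k => (∃ l, sat.lit j l = (i, s)) ∧ (k : ℕ) = (j : ℕ)
  | PhiV.vcg j, PhiV.vcg j' => (j' : ℕ) = (j : ℕ) + 1
  | PhiV.vcg j, PhiV.vx _ => (j : ℕ) + 1 = m
  | _, _ => False

/-- The graph of the reduced MPP instance `Φ`. -/
def phiGraph {n m : ℕ} (sat : ThreeSat n m) : SimpleGraph (PhiV n m) :=
  SimpleGraph.fromRel (phiRel sat)

/-- Start configuration of `Φ`: the variable robot `r_{x_i}` (index
`Sum.inl i`) starts at `v_{x_i}`; the clause robot `r_{c_j}` (index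
`Sum.inr j`) starts at `v_{c_j}`. -/
def phiStart {n m : ℕ} : Fin n ⊕ Fin m → PhiV n m :=
  Sum.elim PhiV.vx PhiV.vc

/-- Goal configuration of `Φ`: `r_{x_i}` must reach `v_{x_i}^g` and `r_{c_j}`
must reach `v_{c_j}^g`. -/
def phiGoal {n m : ℕ} : Fin n ⊕ Fin m → PhiV n m :=
  Sum.elim PhiV.vxg PhiV.vcg

end MPPFormal

namespace MPPFormal

section Aux

variable {V : Type}

lemma collide_symm {p q : ℕ → V} (h : Collide p q) : Collide q p := by
  rcases h with ⟨t, ht⟩ | ⟨t, h1, h2, h3⟩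
  · exact Or.inl ⟨t, ht.symm⟩
  · exact Or.inr ⟨t, h2.symm, h1.symm,
      fun hq => h3 (h1.trans (hq.symm.trans h2.symm))⟩

lemma arrival_eq {g : V} {p : ℕ → V} {N : ℕ} (hN : p N = g)
    (h : ∀ t, t < N → p t ≠ g) : arrivalTime g p = N := by
  refine le_antisymm (Nat.sInf_le hN) ?_
  by_contra hc
  push_neg at hc
  exact h _ hc (Nat.sInf_mem (s := {t | p t = g}) ⟨N, hN⟩)

lemma pathLen_eq {p : ℕ → V} {N : ℕ} (hmove : ∀ t, t < N → p t ≠ p (t + 1))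
    (hstay : ∀ t, N ≤ t → p t = p (t + 1)) : pathLen p = N := by
  have hs : {t | p t ≠ p (t + 1)} = ↑(Finset.range N) := by
    ext t
    simp only [Set.mem_setOf_eq, Finset.coe_range, Set.mem_Iio]
    constructor
    · intro ht
      by_contra hge
      exact ht (hstay t (le_of_not_gt hge))
    · exact hmove t
  rw [pathLen, hs, Set.ncard_coe_finset, Finset.card_range]

variable {n m : ℕ}

/-- Position of the variable robot `i` (choosing side `o`) at time `t`. -/
def vpos (i : Fin n) (o : Bool) (t : ℕ) : PhiV n m :=
  if t = 0 then .vx i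
  else if t ≤ m + 1 then .mid i o ⟨min (t - 1) m, Nat.lt_succ_of_le (min_le_right _ _)⟩
  else .vxg i

/-- Position of the clause robot `j`, entering via (satisfied) literal `(i, s)`,
at time `t`. -/
def cpos (j : Fin m) (i : Fin n) (s : Bool) (t : ℕ) : PhiV n m :=
  if t = 0 then .vc j
  else if t ≤ (j : ℕ) + 1 then .mid i s ⟨min ((j : ℕ) + 1 - t) m, Nat.lt_succ_of_le (min_le_right _ _)⟩
  else if t = (j : ℕ) + 2 then .vx i
  else .vcg ⟨min (m + (j : ℕ) + 2 - min t (m + 2)) (m - 1),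
    Nat.lt_of_le_of_lt (min_le_right _ _)
      (Nat.sub_lt (Nat.lt_of_le_of_lt (Nat.zero_le _) j.isLt) Nat.one_pos)⟩

lemma vv_ne {i i' : Fin n} (h : i ≠ i') (o o' : Bool) (t t' : ℕ) :
    vpos (m := m) i o t ≠ vpos i' o' t' := by
  unfold vpos
  split_ifs <;> simp_all

lemma vc_eq {i i' : Fin n} {j : Fin m} {o s : Bool} {t t' : ℕ}
    (heq : vpos i o t = cpos j i' s t') :
    (t = 0 ∧ t' = (j : ℕ) + 2 ∧ i = i') ∨ (i = i' ∧ o = s) := by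
  unfold vpos cpos at heq
  split_ifs at heq <;> simp_all

lemma cc_meet {j j' : Fin m} (h : j ≠ j') (i i' : Fin n) (s s' : Bool) (t : ℕ) :
    cpos j i s t ≠ cpos j' i' s' t := by
  have hj := j.isLt
  have hj' := j'.isLt
  have hne : (j : ℕ) ≠ (j' : ℕ) := fun hh => h (Fin.ext hh)
  unfold cpos
  split_ifs <;> simp_all [Fin.ext_iff] <;> omega

set_option maxHeartbeats 2000000 in
lemma cc_swap {j j' : Fin m} (h : j ≠ j') (i i' : Fin n) (s s' : Bool) (t : ℕ)
    (h1 : cpos j i s t = cpos j' i' s' (t + 1))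
    (h2 : cpos j i s (t + 1) = cpos j' i' s' t) : False := by
  have hj := j.isLt
  have hj' := j'.isLt
  have hne : (j : ℕ) ≠ (j' : ℕ) := fun hh => h (Fin.ext hh)
  unfold cpos at h1 h2
  split_ifs at h1 h2 <;> simp_all [Fin.ext_iff] <;> omega

end Aux

section Aux2

variable {n m : ℕ}

lemma vpos_late {i : Fin n} {o : Bool} {t : ℕ} (h : m + 2 ≤ t) :
    vpos (m := m) i o t = .vxg i := by
  unfold vpos; rw [if_neg (by omega), if_neg (by omega)]

lemma cpos_late {j : Fin m} {i : Fin n} {s : Bool} {t : ℕ} (h : m + 2 ≤ t) :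
    cpos j i s t = .vcg j := by
  have hj := j.isLt
  unfold cpos
  rw [if_neg (by omega), if_neg (by omega), if_neg (by omega)]
  congr 1
  simp only [Fin.ext_iff, Fin.val_mk]
  omega

lemma vpos_arr {i : Fin n} {o : Bool} :
    arrivalTime (PhiV.vxg i) (vpos (m := m) i o) = m + 2 := by
  refine arrival_eq (vpos_late le_rfl) ?_
  intro t ht
  unfold vpos
  split_ifs <;> simp_all [Fin.ext_iff] <;> omega

lemma cpos_arr {j : Fin m} {i : Fin n} {s : Bool} :
    arrivalTime (PhiV.vcg j) (cpos j i s) = m + 2 := by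
  have hj := j.isLt
  refine arrival_eq (cpos_late le_rfl) ?_
  intro t ht
  unfold cpos
  split_ifs <;> simp_all [Fin.ext_iff] <;> omega

lemma vpos_len {i : Fin n} {o : Bool} :
    pathLen (vpos (m := m) i o) = m + 2 := by
  refine pathLen_eq ?_ ?_
  · intro t ht
    unfold vpos
    split_ifs <;> simp_all [Fin.ext_iff] <;> omega
  · intro t ht
    rw [vpos_late ht, vpos_late (by omega)]

lemma cpos_len {j : Fin m} {i : Fin n} {s : Bool} :
    pathLen (cpos j i s) = m + 2 := by
  have hj := j.isLt
  refine pathLen_eq ?_ ?_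
  · intro t ht
    unfold cpos
    split_ifs <;> simp_all [Fin.ext_iff] <;> omega
  · intro t ht
    rw [cpos_late ht, cpos_late (by omega)]

lemma vpos_adj (sat : ThreeSat n m) (i : Fin n) (o : Bool) (t : ℕ) :
    (phiGraph sat).Adj (vpos i o t) (vpos i o (t + 1)) ∨
      vpos (m := m) i o t = vpos i o (t + 1) := by
  by_cases hl : m + 2 ≤ t
  · right; rw [vpos_late hl, vpos_late (by omega)]
  · left
    simp only [phiGraph, SimpleGraph.fromRel_adj]
    unfold vpos
    split_ifs <;>
      simp_all [phiRel, Fin.ext_iff] <;> omega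

lemma cpos_adj (sat : ThreeSat n m) (j : Fin m) (i : Fin n) (s : Bool)
    (hlit : ∃ l, sat.lit j l = (i, s)) (t : ℕ) :
    (phiGraph sat).Adj (cpos j i s t) (cpos j i s (t + 1)) ∨
      cpos j i s t = cpos j i s (t + 1) := by
  have hj := j.isLt
  by_cases hl : m + 2 ≤ t
  · right; rw [cpos_late hl, cpos_late (by omega)]
  · left
    simp only [phiGraph, SimpleGraph.fromRel_adj]
    unfold cpos
    split_ifs <;>
      simp_all [phiRel, Fin.ext_iff] <;> omega

lemma vpos_feasible (sat : ThreeSat n m) (i : Fin n) (o : Bool) :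
    FeasiblePath (phiGraph sat) (.vx i) (.vxg i) (vpos i o) := by
  refine ⟨by simp [vpos], ⟨m + 2, vpos_late le_rfl⟩, ?_, vpos_adj sat i o⟩
  intro t ht
  rw [vpos_arr] at ht
  exact vpos_late ht

lemma cpos_feasible (sat : ThreeSat n m) (j : Fin m) (i : Fin n) (s : Bool)
    (hlit : ∃ l, sat.lit j l = (i, s)) :
    FeasiblePath (phiGraph sat) (.vc j) (.vcg j) (cpos j i s) := by
  refine ⟨by simp [cpos], ⟨m + 2, cpos_late le_rfl⟩, ?_, cpos_adj sat j i s hlit⟩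
  intro t ht
  rw [cpos_arr] at ht
  exact cpos_late ht

end Aux2


/-- If the 3SAT instance is satisfiable, then the reduced MPP instance `Φ`
admits a solution in which all `n + m` robots start moving at time step zero,
each follows a shortest path, and each arrives at its goal at time step
`m + 2` (so each robot's arrival time and traveled distance equal `m + 2`);
in particular `Φ` admits a solution of total arrival time `(n + m)(m + 2)`
and makespan `m + 2`. -/
theorem satisfiable_gives_optimal_solution {n m : ℕ} (hm : 0 < m)
    (sat : ThreeSat n m) (hsat : sat.Satisfiable) :
    ∃ p : Fin n ⊕ Fin m → ℕ → PhiV n m,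
      IsSolution (phiGraph sat) phiStart phiGoal p ∧
      (∀ i, arrivalTime (phiGoal i) (p i) = m + 2 ∧ pathLen (p i) = m + 2) ∧
      totalTime phiGoal p = (n + m) * (m + 2) ∧
      makespan phiGoal p = m + 2 := by
  obtain ⟨a, ha⟩ := hsat
  choose k hk using ha
  let p : Fin n ⊕ Fin m → ℕ → PhiV n m :=
    Sum.elim (fun i => vpos i (!(a i)))
      (fun j => cpos j (sat.lit j (k j)).1 (sat.lit j (k j)).2)
  have hbul : ∀ r, arrivalTime (phiGoal r) (p r) = m + 2 ∧ pathLen (p r) = m + 2 := by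
    rintro (i | j)
    · exact ⟨vpos_arr, vpos_len⟩
    · exact ⟨cpos_arr, cpos_len⟩
  have hvc : ∀ (i : Fin n) (j : Fin m),
      ¬ Collide (vpos i (!(a i)))
        (cpos j (sat.lit j (k j)).1 (sat.lit j (k j)).2) := by
    intro i j hc
    have hd : i ≠ (sat.lit j (k j)).1 ∨ (!(a i)) ≠ (sat.lit j (k j)).2 := by
      by_cases hii : i = (sat.lit j (k j)).1
      · right
        rw [hii, ← hk j]
        exact Bool.not_ne_self _
      · exact Or.inl hii
    rcases hc with ⟨t, ht⟩ | ⟨t, h1, h2, h3⟩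
    · rcases vc_eq ht with ⟨ht0, ht2, _⟩ | ⟨hie, hoe⟩
      · omega
      · rcases hd with hd | hd <;> exact hd (by assumption)
    · rcases vc_eq h1 with ⟨ht0, ht2, _⟩ | ⟨hie, hoe⟩
      · omega
      · rcases hd with hd | hd <;> exact hd (by assumption)
  refine ⟨p, ⟨?_, ?_⟩, hbul, ?_, ?_⟩
  · rintro (i | j)
    · exact vpos_feasible sat i _
    · exact cpos_feasible sat j _ _ ⟨k j, rfl⟩
  · rintro (i | j) (i' | j') hne
    · have hii : i ≠ i' := fun h => hne (congrArg Sum.inl h)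
      rintro (⟨t, ht⟩ | ⟨t, h1, h2, h3⟩)
      · exact vv_ne hii _ _ t t ht
      · exact vv_ne hii _ _ t (t + 1) h1
    · exact hvc i j'
    · exact fun hc => hvc i' j (collide_symm hc)
    · have hjj : j ≠ j' := fun h => hne (congrArg Sum.inr h)
      rintro (⟨t, ht⟩ | ⟨t, h1, h2, h3⟩)
      · exact cc_meet hjj _ _ _ _ t ht
      · exact cc_swap hjj _ _ _ _ t h1 h2
  · rw [totalTime, Finset.sum_congr rfl (fun r _ => (hbul r).1),
      Finset.sum_const, Finset.card_univ]
    simp [Fintype.card_sum, mul_comm]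
  · have hne : Nonempty (Fin n ⊕ Fin m) := ⟨Sum.inr ⟨0, hm⟩⟩
    rw [makespan, Finset.sup_congr rfl (fun r _ => (hbul r).1),
      Finset.sup_const Finset.univ_nonempty]

end MPPFormal
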